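/- Let x_n > 0 be the distance from a point noise source to the center of a spherical receiver of radius r_obs > 0, and set r_dif = r_obs − x_n, r_sum = r_obs + x_n, and β = sgn(r_dif). Then for every t > 0, the time-varying impact integral in the absence of flow and molecule degradation satisfies ∫₀^t { (1/2)[erf((r_obs − x_n)/(2√τ)) + erf((r_obs + x_n)/(2√τ))] + (1/x_n)·√(τ/π)·[exp(−r_sum²/(4τ)) − exp(−r_dif²/(4τ))] } dτ = erf(r_dif/(2√t))·[r_dif²/4 + t/2 + r_dif³/(6 x_n)] + erf(r_sum/(2√t))·[r_sum²/4 + t/2 − r_sum³/(6 x_n)] + √(t/π)·exp(−r_dif²/(4t))·[r_dif/2 − 2t/(3 x_n) + r_dif²/(3 x_n)] + √(t/π)·exp(−r_sum²/(4t))·[r_sum/2 + 2t/(3 x_n) − r_sum²/(3 x_n)] − β·r_dif²/4 − r_sum²/4 + r_sum³/(6 x_n) − |r_dif|³/(6 x_n). -/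

import Mathlib

open Real MeasureTheory

/-- The error function `erf a = (2/√π) ∫₀^a exp(−b²) db`. -/
noncomputable def erf (a : ℝ) : ℝ := (2 / Real.sqrt π) * ∫ b in (0:ℝ)..a, Real.exp (-b^2)

lemma erf_hasDerivAt (a : ℝ) : HasDerivAt erf (2 / Real.sqrt π * Real.exp (-a^2)) a := by
  have hc : Continuous fun b : ℝ => Real.exp (-b^2) := by continuity
  have h : HasDerivAt (fun u : ℝ => ∫ b in (0:ℝ)..u, Real.exp (-b^2)) (Real.exp (-a^2)) a :=
    intervalIntegral.integral_hasDerivAt_right (hc.intervalIntegrable _ _)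
      (hc.stronglyMeasurable.stronglyMeasurableAtFilter) hc.continuousAt
  exact h.const_mul (2 / Real.sqrt π)

lemma continuous_erf : Continuous erf :=
  continuous_iff_continuousAt.2 fun a => (erf_hasDerivAt a).continuousAt

lemma erf_neg (a : ℝ) : erf (-a) = - erf a := by
  have h := intervalIntegral.integral_comp_neg (a := (0:ℝ)) (b := a) (fun b => Real.exp (-b^2))
  simp only [neg_zero, neg_neg, neg_sq] at h
  rw [erf, erf, ← mul_neg]
  congr 1
  rw [h]
  exact intervalIntegral.integral_symm _ _

lemma tendsto_erf_atTop : Filter.Tendsto erf Filter.atTop (nhds 1) := by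
  have hc : Continuous fun b : ℝ => Real.exp (-b^2) := by continuity
  have hint : IntegrableOn (fun b : ℝ => Real.exp (-b^2)) (Set.Ioi 0) := by
    have := (integrable_exp_neg_mul_sq (b := 1) one_pos).integrableOn (s := Set.Ioi (0:ℝ))
    simpa using this
  have h := MeasureTheory.intervalIntegral_tendsto_integral_Ioi (μ := volume) 0 hint
      (Filter.tendsto_id (α := ℝ))
  have hval : ∫ b in Set.Ioi (0:ℝ), Real.exp (-b^2) = Real.sqrt π / 2 := by
    have := integral_gaussian_Ioi 1
    simpa using this
  rw [hval] at h
  have := h.const_mul (2 / Real.sqrt π)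
  have hπ : Real.sqrt π ≠ 0 := by positivity
  have : Filter.Tendsto erf Filter.atTop (nhds (2 / Real.sqrt π * (Real.sqrt π / 2))) := by
    exact this
  convert this using 2
  field_simp

lemma monotone_erf : Monotone erf := by
  have hd : ∀ a : ℝ, 0 ≤ deriv erf a := by
    intro a
    rw [(erf_hasDerivAt a).deriv]
    positivity
  exact monotone_of_deriv_nonneg (fun a => (erf_hasDerivAt a).differentiableAt) hd

lemma erf_le_one (a : ℝ) : erf a ≤ 1 := monotone_erf.ge_of_tendsto tendsto_erf_atTop a

lemma neg_one_le_erf (a : ℝ) : -1 ≤ erf a := by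
  have := erf_le_one (-a)
  rw [erf_neg] at this
  linarith

lemma abs_erf_le_one (a : ℝ) : |erf a| ≤ 1 := abs_le.2 ⟨neg_one_le_erf a, erf_le_one a⟩

lemma tendsto_scaled_atTop {r : ℝ} (hr : 0 < r) :
    Filter.Tendsto (fun τ : ℝ => r / (2 * Real.sqrt τ)) (nhdsWithin 0 (Set.Ioi 0)) Filter.atTop := by
  have h1 : Filter.Tendsto (fun τ : ℝ => 2 * Real.sqrt τ / r) (nhdsWithin 0 (Set.Ioi 0))
      (nhdsWithin 0 (Set.Ioi 0)) := by
    rw [tendsto_nhdsWithin_iff]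
    constructor
    · have : Filter.Tendsto (fun τ : ℝ => 2 * Real.sqrt τ / r) (nhds 0) (nhds (2 * Real.sqrt 0 / r)) := by
        exact ((continuous_const.mul continuous_sqrt).div_const r).tendsto 0
      simpa using this.mono_left nhdsWithin_le_nhds
    · filter_upwards [self_mem_nhdsWithin] with τ (hτ : 0 < τ)
      have : 0 < Real.sqrt τ := Real.sqrt_pos.2 hτ
      exact Set.mem_Ioi.2 (by positivity)
  have := tendsto_inv_nhdsGT_zero.comp h1
  refine this.congr fun τ => ?_
  simp [inv_div]

lemma tendsto_erf_scaled (r : ℝ) :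
    Filter.Tendsto (fun τ : ℝ => erf (r / (2 * Real.sqrt τ))) (nhdsWithin 0 (Set.Ioi 0))
      (nhds (Real.sign r)) := by
  rcases lt_trichotomy r 0 with h | h | h
  · have hpos := (tendsto_erf_atTop.comp (tendsto_scaled_atTop (neg_pos.2 h)))
    rw [Real.sign_of_neg h]
    have : Filter.Tendsto (fun τ : ℝ => - erf (-r / (2 * Real.sqrt τ)))
        (nhdsWithin 0 (Set.Ioi 0)) (nhds (-1)) := hpos.neg
    refine this.congr fun τ => ?_
    rw [← erf_neg]
    ring_nf
  · simp [h, Real.sign_zero, erf]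
  · rw [Real.sign_of_pos h]
    exact tendsto_erf_atTop.comp (tendsto_scaled_atTop h)

lemma tendsto_gauss (r : ℝ) :
    Filter.Tendsto (fun τ : ℝ => Real.sqrt (τ / π) * Real.exp (-r^2 / (4*τ)))
      (nhdsWithin 0 (Set.Ioi 0)) (nhds 0) := by
  have hub : Filter.Tendsto (fun τ : ℝ => Real.sqrt (τ / π)) (nhdsWithin 0 (Set.Ioi 0)) (nhds 0) := by
    have : Filter.Tendsto (fun τ : ℝ => Real.sqrt (τ / π)) (nhds 0) (nhds (Real.sqrt (0 / π))) :=
      (continuous_sqrt.comp (continuous_id.div_const π)).tendsto 0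
    simpa using this.mono_left nhdsWithin_le_nhds
  refine tendsto_of_tendsto_of_tendsto_of_le_of_le' tendsto_const_nhds hub ?_ ?_
  · filter_upwards with τ; positivity
  · filter_upwards [self_mem_nhdsWithin] with τ (hτ : 0 < τ)
    have : Real.exp (-r^2 / (4*τ)) ≤ 1 := by
      rw [Real.exp_le_one_iff, neg_div, neg_nonpos]
      positivity
    nlinarith [Real.sqrt_nonneg (τ/π), Real.exp_pos (-r^2/(4*τ))]

lemma hasDerivAt_erf_scaled (r : ℝ) {τ : ℝ} (hτ : 0 < τ) :
    HasDerivAt (fun τ : ℝ => erf (r / (2 * Real.sqrt τ)))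
      (-(r * Real.exp (-r^2/(4*τ)) / (2 * Real.sqrt π * τ * Real.sqrt τ))) τ := by
  have hst : 0 < Real.sqrt τ := Real.sqrt_pos.2 hτ
  have hu : HasDerivAt (fun τ : ℝ => r / (2 * Real.sqrt τ))
      ((0 * (2 * Real.sqrt τ) - r * (2 * (1 / (2 * Real.sqrt τ)))) / (2 * Real.sqrt τ)^2) τ :=
    (hasDerivAt_const τ r).div ((Real.hasDerivAt_sqrt hτ.ne').const_mul 2) (by positivity)
  have h := (erf_hasDerivAt (r / (2 * Real.sqrt τ))).comp τ hu
  have hsq : (r / (2 * Real.sqrt τ))^2 = r^2 / (4*τ) := by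
    rw [div_pow, mul_pow, Real.sq_sqrt hτ.le]; norm_num
  rw [Function.comp_def, hsq] at h
  refine h.congr_deriv ?_
  have hπ : 0 < Real.sqrt π := Real.sqrt_pos.2 pi_pos
  obtain ⟨u, hupos, rfl⟩ : ∃ u : ℝ, 0 < u ∧ u^2 = τ :=
    ⟨Real.sqrt τ, hst, Real.sq_sqrt hτ.le⟩
  simp only [Real.sqrt_sq hupos.le] at *
  field_simp
  ring

lemma hasDerivAt_gauss_term (r : ℝ) {τ : ℝ} (hτ : 0 < τ) :
    HasDerivAt (fun τ : ℝ => Real.sqrt (τ/π) * Real.exp (-r^2/(4*τ)))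
      (Real.exp (-r^2/(4*τ)) * (τ + r^2/2) / (2 * Real.sqrt π * τ * Real.sqrt τ)) τ := by
  have hst : 0 < Real.sqrt τ := Real.sqrt_pos.2 hτ
  have hπ : 0 < Real.sqrt π := Real.sqrt_pos.2 pi_pos
  have hinner : HasDerivAt (fun τ : ℝ => -r^2 / (4*τ))
      ((0 * (4*τ) - -r^2 * 4) / (4*τ)^2) τ :=
    (hasDerivAt_const τ (-r^2)).div ((hasDerivAt_id τ).const_mul 4 |>.congr_deriv (by ring)) (by positivity)
  have hexp := hinner.exp
  have hsq : HasDerivAt (fun τ : ℝ => Real.sqrt τ / Real.sqrt π) (1 / (2 * Real.sqrt τ) / Real.sqrt π) τ :=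
    (Real.hasDerivAt_sqrt hτ.ne').div_const _
  have h := hsq.mul hexp
  have heq : (fun τ : ℝ => Real.sqrt (τ/π) * Real.exp (-r^2/(4*τ)))
      =ᶠ[nhds τ] (fun τ : ℝ => Real.sqrt τ / Real.sqrt π * Real.exp (-r^2/(4*τ))) := by
    filter_upwards [Ioi_mem_nhds hτ] with τ' (hτ' : 0 < τ')
    rw [Real.sqrt_div hτ'.le]
  refine (h.congr_of_eventuallyEq heq).congr_deriv ?_
  obtain ⟨u, hupos, rfl⟩ : ∃ u : ℝ, 0 < u ∧ u^2 = τ :=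
    ⟨Real.sqrt τ, hst, Real.sq_sqrt hτ.le⟩
  simp only [Real.sqrt_sq hupos.le] at *
  field_simp
  ring

lemma master (x d s : ℝ) (hx : 0 < x) (hs : 0 < s) {t : ℝ} (ht : 0 < t) :
    (∫ τ in (0:ℝ)..t,
      ((1/2) * (erf (d / (2 * Real.sqrt τ)) + erf (s / (2 * Real.sqrt τ)))
        + (1/x) * Real.sqrt (τ/π) * (Real.exp (-s^2 / (4*τ)) - Real.exp (-d^2 / (4*τ)))))
    = (erf (d / (2 * Real.sqrt t)) * (d^2/4 + t/2 + d^3/(6*x))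
      + erf (s / (2 * Real.sqrt t)) * (s^2/4 + t/2 - s^3/(6*x))
      + Real.sqrt (t/π) * Real.exp (-d^2 / (4*t)) * (d/2 - 2*t/(3*x) + d^2/(3*x))
      + Real.sqrt (t/π) * Real.exp (-s^2 / (4*t)) * (s/2 + 2*t/(3*x) - s^2/(3*x)))
      - (Real.sign d * (d^2/4 + d^3/(6*x)) + (s^2/4 - s^3/(6*x))) := by
  set F : ℝ → ℝ := fun τ =>
      erf (d / (2 * Real.sqrt τ)) * (d^2/4 + τ/2 + d^3/(6*x))
      + erf (s / (2 * Real.sqrt τ)) * (s^2/4 + τ/2 - s^3/(6*x))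
      + Real.sqrt (τ/π) * Real.exp (-d^2 / (4*τ)) * (d/2 - 2*τ/(3*x) + d^2/(3*x))
      + Real.sqrt (τ/π) * Real.exp (-s^2 / (4*τ)) * (s/2 + 2*τ/(3*x) - s^2/(3*x)) with hFdef
  set f : ℝ → ℝ := fun τ =>
      (1/2) * (erf (d / (2 * Real.sqrt τ)) + erf (s / (2 * Real.sqrt τ)))
        + (1/x) * Real.sqrt (τ/π) * (Real.exp (-s^2 / (4*τ)) - Real.exp (-d^2 / (4*τ))) with hfdef
  have hπ : 0 < Real.sqrt π := Real.sqrt_pos.2 pi_pos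
  have hFderiv : ∀ τ : ℝ, 0 < τ → HasDerivAt F (f τ) τ := by
    intro τ hτ
    have hst : 0 < Real.sqrt τ := Real.sqrt_pos.2 hτ
    have hA : HasDerivAt (fun τ : ℝ => d^2/4 + τ/2 + d^3/(6*x)) (1/2) τ := by
      simpa using (((hasDerivAt_id τ).div_const 2).const_add (d^2/4)).add_const (d^3/(6*x))
    have hB : HasDerivAt (fun τ : ℝ => s^2/4 + τ/2 - s^3/(6*x)) (1/2) τ := by
      simpa using (((hasDerivAt_id τ).div_const 2).const_add (s^2/4)).sub_const (s^3/(6*x))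
    have hC : HasDerivAt (fun τ : ℝ => d/2 - 2*τ/(3*x) + d^2/(3*x)) (-(2/(3*x))) τ := by
      have : HasDerivAt (fun τ : ℝ => 2*τ/(3*x)) (2/(3*x)) τ := by
        simpa using ((hasDerivAt_id τ).const_mul 2).div_const (3*x)
      simpa using ((this.const_sub (d/2)).add_const (d^2/(3*x)))
    have hD : HasDerivAt (fun τ : ℝ => s/2 + 2*τ/(3*x) - s^2/(3*x)) (2/(3*x)) τ := by
      have : HasDerivAt (fun τ : ℝ => 2*τ/(3*x)) (2/(3*x)) τ := by
        simpa using ((hasDerivAt_id τ).const_mul 2).div_const (3*x)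
      simpa using ((this.const_add (s/2)).sub_const (s^2/(3*x)))
    have h :=
      ((((hasDerivAt_erf_scaled d hτ).mul hA).add ((hasDerivAt_erf_scaled s hτ).mul hB)).add
        ((hasDerivAt_gauss_term d hτ).mul hC)).add ((hasDerivAt_gauss_term s hτ).mul hD)
    refine h.congr_deriv ?_
    rw [hfdef]
    simp only [Real.sqrt_div hτ.le]
    obtain ⟨u, hupos, rfl⟩ : ∃ u : ℝ, 0 < u ∧ u^2 = τ :=
      ⟨Real.sqrt τ, hst, Real.sq_sqrt hτ.le⟩
    simp only [Real.sqrt_sq hupos.le] at *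
    field_simp
    ring
  have hint : IntervalIntegrable f volume 0 t := by
    rw [intervalIntegrable_iff_integrableOn_Ioc_of_le ht.le]
    have hmeas : AEStronglyMeasurable f volume := by
      have m0 : Measurable fun τ : ℝ => 2 * Real.sqrt τ :=
        continuous_sqrt.measurable.const_mul 2
      have m1 : Measurable fun τ : ℝ => erf (d / (2 * Real.sqrt τ)) :=
        continuous_erf.measurable.comp (measurable_const.div m0)
      have m2 : Measurable fun τ : ℝ => erf (s / (2 * Real.sqrt τ)) :=
        continuous_erf.measurable.comp (measurable_const.div m0)
      have m3 : Measurable fun τ : ℝ => Real.sqrt (τ/π) :=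
        (continuous_sqrt.comp (continuous_id.div_const π)).measurable
      have m4 : Measurable fun τ : ℝ => Real.exp (-s^2 / (4*τ)) :=
        Real.measurable_exp.comp (measurable_const.div (measurable_id.const_mul 4))
      have m5 : Measurable fun τ : ℝ => Real.exp (-d^2 / (4*τ)) :=
        Real.measurable_exp.comp (measurable_const.div (measurable_id.const_mul 4))
      exact (((m1.add m2).const_mul (1/2)).add ((m3.const_mul (1/x)).mul (m4.sub m5))).aestronglyMeasurable
    refine Measure.integrableOn_of_bounded (M := 1 + 2 * Real.sqrt (t/π) / x)
      measure_Ioc_lt_top.ne hmeas ?_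
    filter_upwards [ae_restrict_mem measurableSet_Ioc] with τ hτ
    obtain ⟨hτ0, hτt⟩ := hτ
    have hE1 : |Real.exp (-s^2 / (4*τ))| ≤ 1 := by
      rw [abs_of_pos (Real.exp_pos _), Real.exp_le_one_iff, neg_div, neg_nonpos]
      positivity
    have hE2 : |Real.exp (-d^2 / (4*τ))| ≤ 1 := by
      rw [abs_of_pos (Real.exp_pos _), Real.exp_le_one_iff, neg_div, neg_nonpos]
      positivity
    have hsq : |Real.sqrt (τ/π)| ≤ Real.sqrt (t/π) := by
      rw [abs_of_nonneg (Real.sqrt_nonneg _)]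
      exact Real.sqrt_le_sqrt (by gcongr)
    have h1 : |(1/2) * (erf (d / (2 * Real.sqrt τ)) + erf (s / (2 * Real.sqrt τ)))| ≤ 1 := by
      rw [abs_mul]
      have := abs_erf_le_one (d / (2 * Real.sqrt τ))
      have := abs_erf_le_one (s / (2 * Real.sqrt τ))
      have := abs_add_le (erf (d / (2 * Real.sqrt τ))) (erf (s / (2 * Real.sqrt τ)))
      rw [abs_of_pos (by norm_num : (0:ℝ) < 1/2)]
      linarith
    have h2 : |(1/x) * Real.sqrt (τ/π) * (Real.exp (-s^2 / (4*τ)) - Real.exp (-d^2 / (4*τ)))|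
        ≤ 2 * Real.sqrt (t/π) / x := by
      rw [abs_mul, abs_mul, abs_of_pos (by positivity : (0:ℝ) < 1/x)]
      have habs : |Real.exp (-s^2 / (4*τ)) - Real.exp (-d^2 / (4*τ))| ≤ 2 := by
        have := abs_sub (Real.exp (-s^2 / (4*τ))) (Real.exp (-d^2 / (4*τ)))
        linarith
      calc 1/x * |Real.sqrt (τ/π)| * |Real.exp (-s^2 / (4*τ)) - Real.exp (-d^2 / (4*τ))|
          ≤ 1/x * Real.sqrt (t/π) * 2 := by
            gcongr
        _ = 2 * Real.sqrt (t/π) / x := by ring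
    calc ‖f τ‖ ≤ |(1/2) * (erf (d / (2 * Real.sqrt τ)) + erf (s / (2 * Real.sqrt τ)))|
          + |(1/x) * Real.sqrt (τ/π) * (Real.exp (-s^2 / (4*τ)) - Real.exp (-d^2 / (4*τ)))| :=
        abs_add_le _ _
      _ ≤ 1 + 2 * Real.sqrt (t/π) / x := add_le_add h1 h2
  have h0 : Filter.Tendsto F (nhdsWithin 0 (Set.Ioi 0))
      (nhds (Real.sign d * (d^2/4 + d^3/(6*x)) + (s^2/4 - s^3/(6*x)))) := by
    have cA : Filter.Tendsto (fun τ : ℝ => d^2/4 + τ/2 + d^3/(6*x)) (nhdsWithin 0 (Set.Ioi 0))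
        (nhds (d^2/4 + d^3/(6*x))) := by
      have h : Continuous (fun τ : ℝ => d^2/4 + τ/2 + d^3/(6*x)) :=
        (continuous_const.add (continuous_id.div_const 2)).add continuous_const
      simpa using (h.tendsto 0).mono_left nhdsWithin_le_nhds
    have cB : Filter.Tendsto (fun τ : ℝ => s^2/4 + τ/2 - s^3/(6*x)) (nhdsWithin 0 (Set.Ioi 0))
        (nhds (s^2/4 - s^3/(6*x))) := by
      have h : Continuous (fun τ : ℝ => s^2/4 + τ/2 - s^3/(6*x)) :=
        (continuous_const.add (continuous_id.div_const 2)).sub continuous_const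
      simpa using (h.tendsto 0).mono_left nhdsWithin_le_nhds
    have cC : Filter.Tendsto (fun τ : ℝ => d/2 - 2*τ/(3*x) + d^2/(3*x)) (nhdsWithin 0 (Set.Ioi 0))
        (nhds (d/2 + d^2/(3*x))) := by
      have h : Continuous (fun τ : ℝ => d/2 - 2*τ/(3*x) + d^2/(3*x)) :=
        (continuous_const.sub ((continuous_const.mul continuous_id).div_const (3*x))).add continuous_const
      simpa using (h.tendsto 0).mono_left nhdsWithin_le_nhds
    have cD : Filter.Tendsto (fun τ : ℝ => s/2 + 2*τ/(3*x) - s^2/(3*x)) (nhdsWithin 0 (Set.Ioi 0))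
        (nhds (s/2 - s^2/(3*x))) := by
      have h : Continuous (fun τ : ℝ => s/2 + 2*τ/(3*x) - s^2/(3*x)) :=
        (continuous_const.add ((continuous_const.mul continuous_id).div_const (3*x))).sub continuous_const
      simpa using (h.tendsto 0).mono_left nhdsWithin_le_nhds
    have t1 := (tendsto_erf_scaled d).mul cA
    have t2 := (tendsto_erf_scaled s).mul cB
    have t3 := (tendsto_gauss d).mul cC
    have t4 := (tendsto_gauss s).mul cD
    have := ((t1.add t2).add t3).add t4
    rw [Real.sign_of_pos hs] at this
    convert this using 1
    ring
  have hT : Filter.Tendsto F (nhdsWithin t (Set.Iio t)) (nhds (F t)) :=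
    (hFderiv t ht).continuousAt.continuousWithinAt
  have := intervalIntegral.integral_eq_sub_of_hasDerivAt_of_tendsto ht
    (fun τ hτ => hFderiv τ hτ.1) hint h0 hT
  rw [this, hFdef]

lemma sign_mul_cube (d : ℝ) : Real.sign d * d^3 = |d|^3 := by
  rcases lt_trichotomy d 0 with h | h | h
  · rw [Real.sign_of_neg h, abs_of_neg h]; ring
  · simp [h]
  · rw [Real.sign_of_pos h, abs_of_pos h]; ring


/-- Time-varying impact of a continuously-emitting noise source in the absence of flow and
molecule degradation (Theorem 2 of the paper). -/
theorem time_varying_impact_no_flow_no_degradation (x_n r_obs r_dif r_sum β : ℝ)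
    (hx : 0 < x_n) (hr : 0 < r_obs)
    (hdif : r_dif = r_obs - x_n) (hsum : r_sum = r_obs + x_n)
    (hβ : β = Real.sign r_dif) :
    ∀ t > (0:ℝ),
    (∫ τ in (0:ℝ)..t,
      ((1/2) * (erf ((r_obs - x_n) / (2 * Real.sqrt τ))
                 + erf ((r_obs + x_n) / (2 * Real.sqrt τ)))
        + (1/x_n) * Real.sqrt (τ/π)
            * (Real.exp (-(r_sum^2) / (4*τ)) - Real.exp (-(r_dif^2) / (4*τ)))))
    = erf (r_dif / (2 * Real.sqrt t)) * (r_dif^2/4 + t/2 + r_dif^3/(6*x_n))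
      + erf (r_sum / (2 * Real.sqrt t)) * (r_sum^2/4 + t/2 - r_sum^3/(6*x_n))
      + Real.sqrt (t/π) * Real.exp (-(r_dif^2) / (4*t))
          * (r_dif/2 - 2*t/(3*x_n) + r_dif^2/(3*x_n))
      + Real.sqrt (t/π) * Real.exp (-(r_sum^2) / (4*t))
          * (r_sum/2 + 2*t/(3*x_n) - r_sum^2/(3*x_n))
      - β * r_dif^2/4 - r_sum^2/4 + r_sum^3/(6*x_n) - |r_dif|^3/(6*x_n) := by
  intro t ht
  subst hβ hdif hsum
  have hs : 0 < r_obs + x_n := by linarith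
  have hmain := master x_n (r_obs - x_n) (r_obs + x_n) hx hs ht
  rw [hmain]
  have hsign := sign_mul_cube (r_obs - x_n)
  linear_combination (-(1/(6*x_n))) * hsign
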